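/- For every proper coloring c : {0,1,…,14} → {1,…,7} of the collinearity graph G, the color sets coincide: {c(1), c(2), c(3), c(11)} = {c(5), c(7), c(8), c(12)}, and this common 4-element set is disjoint from {c(0), c(4), c(6)}. -/

import Mathlib

/-- The nine blocks: 5-element subsets of `Fin 15`. -/
def blocks : Finset (Finset (Fin 15)) :=
  { {0,1,2,3,4}, {0,5,6,7,8}, {9,10,11,12,13}, {1,5,9,10,14}, {1,2,3,6,11},
    {4,5,7,8,12}, {2,7,9,13,14}, {3,8,10,13,14}, {0,4,6,11,12} }

/-- The collinearity graph: distinct vertices are adjacent iff they lie in a common block. -/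
def G : SimpleGraph (Fin 15) where
  Adj v w := v ≠ w ∧ ∃ B ∈ blocks, v ∈ B ∧ w ∈ B
  symm := by
    constructor
    intro v w h
    obtain ⟨hvw, B, hB, hv, hw⟩ := h
    exact ⟨hvw.symm, B, hB, hw, hv⟩
  loopless := by
    constructor
    intro v h
    exact h.1 rfl

/-- For every proper coloring `c : Fin 15 → Fin 7` of the collinearity graph,
the color sets `{c 1, c 2, c 3, c 11}` and `{c 5, c 7, c 8, c 12}` coincide,
this common set has 4 elements, and it is disjoint from `{c 0, c 4, c 6}`. -/
instance : DecidableRel G.Adj := fun v w =>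
  inferInstanceAs (Decidable (v ≠ w ∧ ∃ B ∈ blocks, v ∈ B ∧ w ∈ B))

theorem proper_7_coloring_color_sets (c : Fin 15 → Fin 7)
    (hc : ∀ v w : Fin 15, G.Adj v w → c v ≠ c w) :
    ({c 1, c 2, c 3, c 11} : Finset (Fin 7)) = {c 5, c 7, c 8, c 12} ∧
    ({c 1, c 2, c 3, c 11} : Finset (Fin 7)).card = 4 ∧
    Disjoint ({c 1, c 2, c 3, c 11} : Finset (Fin 7)) {c 0, c 4, c 6} := by
  -- pairwise inequalities from adjacencies
  have h12 := hc 1 2 (by decide)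
  have h13 := hc 1 3 (by decide)
  have h1_11 := hc 1 11 (by decide)
  have h23 := hc 2 3 (by decide)
  have h2_11 := hc 2 11 (by decide)
  have h3_11 := hc 3 11 (by decide)
  have h57 := hc 5 7 (by decide)
  have h58 := hc 5 8 (by decide)
  have h5_12 := hc 5 12 (by decide)
  have h78 := hc 7 8 (by decide)
  have h7_12 := hc 7 12 (by decide)
  have h8_12 := hc 8 12 (by decide)
  have h04 := hc 0 4 (by decide)
  have h06 := hc 0 6 (by decide)
  have h46 := hc 4 6 (by decide)
  have h01 := hc 0 1 (by decide)
  have h02 := hc 0 2 (by decide)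
  have h03 := hc 0 3 (by decide)
  have h0_11 := hc 0 11 (by decide)
  have h41 := hc 4 1 (by decide)
  have h42 := hc 4 2 (by decide)
  have h43 := hc 4 3 (by decide)
  have h4_11 := hc 4 11 (by decide)
  have h61 := hc 6 1 (by decide)
  have h62 := hc 6 2 (by decide)
  have h63 := hc 6 3 (by decide)
  have h6_11 := hc 6 11 (by decide)
  have h05 := hc 0 5 (by decide)
  have h07 := hc 0 7 (by decide)
  have h08 := hc 0 8 (by decide)
  have h0_12 := hc 0 12 (by decide)
  have h45 := hc 4 5 (by decide)
  have h47 := hc 4 7 (by decide)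
  have h48 := hc 4 8 (by decide)
  have h4_12 := hc 4 12 (by decide)
  have h65 := hc 6 5 (by decide)
  have h67 := hc 6 7 (by decide)
  have h68 := hc 6 8 (by decide)
  have h6_12 := hc 6 12 (by decide)
  set S : Finset (Fin 7) := {c 0, c 4, c 6} with hS
  have cardS : S.card = 3 := by
    rw [hS, Finset.card_insert_of_notMem (by simp [h04, h06]),
      Finset.card_insert_of_notMem (by simp [h46]), Finset.card_singleton]
  have cardSc : Sᶜ.card = 4 := by
    rw [Finset.card_compl, cardS, Fintype.card_fin]
  have cardA : ({c 1, c 2, c 3, c 11} : Finset (Fin 7)).card = 4 := by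
    rw [Finset.card_insert_of_notMem (by simp [h12, h13, h1_11]),
      Finset.card_insert_of_notMem (by simp [h23, h2_11]),
      Finset.card_insert_of_notMem (by simp [h3_11]), Finset.card_singleton]
  have cardB : ({c 5, c 7, c 8, c 12} : Finset (Fin 7)).card = 4 := by
    rw [Finset.card_insert_of_notMem (by simp [h57, h58, h5_12]),
      Finset.card_insert_of_notMem (by simp [h78, h7_12]),
      Finset.card_insert_of_notMem (by simp [h8_12]), Finset.card_singleton]
  have hA : ({c 1, c 2, c 3, c 11} : Finset (Fin 7)) ⊆ Sᶜ := by
    intro x hx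
    simp only [Finset.mem_insert, Finset.mem_singleton] at hx
    simp only [hS, Finset.mem_compl, Finset.mem_insert, Finset.mem_singleton]
    rcases hx with rfl | rfl | rfl | rfl <;>
      simp [h01.symm, h02.symm, h03.symm, h0_11.symm, h41.symm, h42.symm, h43.symm,
        h4_11.symm, h61.symm, h62.symm, h63.symm, h6_11.symm]
  have hB : ({c 5, c 7, c 8, c 12} : Finset (Fin 7)) ⊆ Sᶜ := by
    intro x hx
    simp only [Finset.mem_insert, Finset.mem_singleton] at hx
    simp only [hS, Finset.mem_compl, Finset.mem_insert, Finset.mem_singleton]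
    rcases hx with rfl | rfl | rfl | rfl <;>
      simp [h05.symm, h07.symm, h08.symm, h0_12.symm, h45.symm, h47.symm, h48.symm,
        h4_12.symm, h65.symm, h67.symm, h68.symm, h6_12.symm]
  have hAeq : ({c 1, c 2, c 3, c 11} : Finset (Fin 7)) = Sᶜ :=
    Finset.eq_of_subset_of_card_le hA (by rw [cardSc, cardA])
  have hBeq : ({c 5, c 7, c 8, c 12} : Finset (Fin 7)) = Sᶜ :=
    Finset.eq_of_subset_of_card_le hB (by rw [cardSc, cardB])
  refine ⟨hAeq.trans hBeq.symm, cardA, ?_⟩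
  rw [hAeq]
  exact disjoint_compl_left
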